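/- In the Pareto setting with initial vertex v_0, let π be a play from v_0 and let p = pay(π). Then there exists a strategy σ_0 of player 0 such that π is consistent with σ_0 and π is σ_0-fixed Pareto-optimal, if and only if for every deviation hv of π with last(h) owned by the environment (last(h) ∈ V∖V_0), player 0 wins from v for the objective {ρ ∈ Plays(v) : ¬(pay(h·ρ) < p)}. -/

import Mathlib

open scoped Classical

/-- An infinite play in the graph with edge relation `E`. -/
def IsPlay {V : Type*} (E : V → V → Prop) (π : ℕ → V) : Prop :=
  ∀ k, E (π k) (π (k + 1))

/-- The history `π 0, …, π k` as a list. -/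
def histList {V : Type*} (π : ℕ → V) (k : ℕ) : List V :=
  (List.range (k + 1)).map π

/-- The accumulated weight of the first `n` edges of `π`. -/
def pathWeight {V : Type*} (w : V → V → ℕ) (π : ℕ → V) (n : ℕ) : ℕ :=
  ∑ j ∈ Finset.range n, w (π j) (π (j + 1))

/-- The cost of a play for weight function `w` and target set `T`. -/
noncomputable def cost {V : Type*} (w : V → V → ℕ) (T : Set V) (π : ℕ → V) : ℕ∞ :=
  if h : ∃ n, π n ∈ T then (pathWeight w π (Nat.find h) : ℕ∞) else ⊤

/-- `σ` is a strategy for the player owning the set of vertices `Vi`. -/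
def IsStrategy {V : Type*} (E : V → V → Prop) (Vi : Set V) (σ : List V → V) : Prop :=
  ∀ (l : List V) (u : V), List.Chain' E (l ++ [u]) → u ∈ Vi → E u (σ (l ++ [u]))

/-- A play is consistent with the strategy `σ` of the player owning `Vi`. -/
def PlayConsistent {V : Type*} (Vi : Set V) (σ : List V → V) (π : ℕ → V) : Prop :=
  ∀ k, π k ∈ Vi → π (k + 1) = σ (histList π k)

/-- The play `h · ρ` obtained by concatenating the history `h` with the play `ρ`. -/
def concatPlay {V : Type*} (h : List V) (ρ : ℕ → V) : ℕ → V := fun k =>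
  if hk : k < h.length then h.get ⟨k, hk⟩ else ρ (k - h.length)

/-- The payoff of a play: the tuple of the `t` environment costs, with the
componentwise partial order. -/
noncomputable def pay {V : Type*} {t : ℕ} (w : Fin t → V → V → ℕ) (T : Fin t → Set V)
    (π : ℕ → V) : Fin t → ℕ∞ :=
  fun i => cost (w i) (T i) π

/-- Player 0 (owning `V0`) wins from `v` for the objective `Ω`. -/
def Player0Wins {V : Type*} (E : V → V → Prop) (V0 : Set V) (v : V)
    (Ω : (ℕ → V) → Prop) : Prop :=
  ∃ σ : List V → V, IsStrategy E V0 σ ∧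
    ∀ ρ, IsPlay E ρ → ρ 0 = v → PlayConsistent V0 σ ρ → Ω ρ

/-- `π` is `σ0`-fixed Pareto-optimal: no play from `v0` consistent with `σ0` has a
strictly smaller payoff. -/
def ParetoOptimal {V : Type*} {t : ℕ} (E : V → V → Prop) (V0 : Set V) (v0 : V)
    (w : Fin t → V → V → ℕ) (T : Fin t → Set V) (σ0 : List V → V) (π : ℕ → V) : Prop :=
  ¬ ∃ π', IsPlay E π' ∧ π' 0 = v0 ∧ PlayConsistent V0 σ0 π' ∧ pay w T π' < pay w T π

section Aux
variable {V : Type*} {E : V → V → Prop}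

lemma histList_length (π : ℕ → V) (k : ℕ) : (histList π k).length = k + 1 := by
  simp [histList]

lemma histList_getElem (π : ℕ → V) (k j : ℕ) (h : j < (histList π k).length) :
    (histList π k)[j] = π j := by
  simp [histList]

lemma histList_getElem? (π : ℕ → V) {k j : ℕ} (h : j ≤ k) :
    (histList π k)[j]? = some (π j) := by
  rw [List.getElem?_eq_getElem (by simpa [histList_length] using Nat.lt_succ_of_le h)]
  rw [histList_getElem]

lemma histList_congr {f g : ℕ → V} {k : ℕ} (h : ∀ j ≤ k, f j = g j) :
    histList f k = histList g k := by
  apply List.ext_getElem (by simp [histList_length])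
  intro n h1 h2
  rw [histList_getElem, histList_getElem]
  exact h n (by simpa [histList_length] using Nat.lt_succ_iff.mp (by simpa [histList_length] using h1))

lemma chain'_histList (hπ : IsPlay E π) (k : ℕ) : List.Chain' E (histList π k) := by
  rw [show List.Chain' E (histList π k) ↔ List.IsChain E (histList π k) from Iff.rfl,
    List.isChain_iff_getElem]
  intro i h
  simp only [List.get_eq_getElem, histList_getElem]
  exact hπ i

lemma concatPlay_hist_le {π ρ : ℕ → V} {k m : ℕ} (h : k ≤ m) :
    concatPlay (histList π m) ρ k = π k := by
  have hk : k < (histList π m).length := by simpa [histList_length] using Nat.lt_succ_of_le h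
  simp only [concatPlay, dif_pos hk, List.get_eq_getElem, histList_getElem]

lemma concatPlay_hist_gt {π ρ : ℕ → V} {k m : ℕ} (h : m < k) :
    concatPlay (histList π m) ρ k = ρ (k - (m + 1)) := by
  have hk : ¬ k < (histList π m).length := by simp [histList_length]; omega
  show dite _ _ _ = _
  rw [dif_neg hk, histList_length]

lemma histList_concatPlay (π ρ : ℕ → V) (m j : ℕ) :
    histList (concatPlay (histList π m) ρ) (m + 1 + j) = histList π m ++ histList ρ j := by
  apply List.ext_getElem (by simp [histList_length]; omega)
  intro n h1 h2
  rw [histList_getElem]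
  by_cases hn : n < m + 1
  · rw [List.getElem_append_left (by simpa [histList_length] using hn)]
    rw [histList_getElem, concatPlay_hist_le (by omega)]
  · rw [List.getElem_append_right (by simp [histList_length]; omega)]
    simp only [histList_length, histList_getElem]
    rw [concatPlay_hist_gt (by omega)]

lemma isPlay_concatPlay {π ρ : ℕ → V} {m : ℕ} (hπ : IsPlay E π) (hρ : IsPlay E ρ)
    (he : E (π m) (ρ 0)) : IsPlay E (concatPlay (histList π m) ρ) := by
  intro k
  rcases lt_trichotomy k m with h | rfl | h
  · rw [concatPlay_hist_le (le_of_lt h), concatPlay_hist_le (by omega)]; exact hπ k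
  · rw [concatPlay_hist_le le_rfl, concatPlay_hist_gt (by omega)]
    simpa using he
  · rw [concatPlay_hist_gt h, concatPlay_hist_gt (by omega)]
    have : k + 1 - (m + 1) = (k - (m + 1)) + 1 := by omega
    rw [this]; exact hρ _

lemma exF (π : ℕ → V) (l : List V) : ∃ j, l[j]? ≠ some (π j) :=
  ⟨l.length, by simp⟩

noncomputable def Fm (π : ℕ → V) (l : List V) : ℕ := Nat.find (exF π l)

lemma Fm_le_length (π : ℕ → V) (l : List V) : Fm π l ≤ l.length :=
  Nat.find_le (by simp)

lemma Fm_spec (π : ℕ → V) (l : List V) : l[Fm π l]? ≠ some (π (Fm π l)) :=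
  Nat.find_spec (exF π l)

lemma Fm_min (π : ℕ → V) (l : List V) {j : ℕ} (h : j < Fm π l) : l[j]? = some (π j) := by
  have := Nat.find_min (exF π l) h
  simpa using this

lemma Fm_histList (π : ℕ → V) (k : ℕ) : Fm π (histList π k) = k + 1 := by
  have h1 : Fm π (histList π k) ≤ k + 1 := by simpa [histList_length] using Fm_le_length π (histList π k)
  rcases h1.lt_or_eq with h | h
  · exact absurd (histList_getElem? π (by omega)) (Fm_spec π (histList π k))
  · exact h

lemma Fm_dev (π π' : ℕ → V) (k m : ℕ) (hag : ∀ j ≤ m, π' j = π j)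
    (hne : π' (m + 1) ≠ π (m + 1)) (hk : m + 1 ≤ k) :
    Fm π (histList π' k) = m + 1 := by
  have h1 : Fm π (histList π' k) ≤ m + 1 := by
    apply Nat.find_le
    rw [histList_getElem? π' hk]
    simpa using hne
  rcases h1.lt_or_eq with h | h
  · exfalso
    apply Fm_spec π (histList π' k)
    rw [histList_getElem? π' (by omega), hag _ (by omega)]
  · exact h


lemma histList_drop (π' : ℕ → V) (k m : ℕ) :
    (histList π' (k + (m + 1))).drop (m + 1) = histList (fun j => π' (j + (m + 1))) k := by
  apply List.ext_getElem
  · rw [List.length_drop, histList_length, histList_length]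
    omega
  intro n h1 h2
  rw [List.getElem_drop, histList_getElem, histList_getElem]
  congr 1
  omega

end Aux

/-- A play `π` from `v0` is consistent with some strategy `σ0` of player 0 making it
`σ0`-fixed Pareto-optimal iff for every deviation `hv` of `π` with `last h` owned by
the environment, player 0 wins from `v` for the objective `¬(pay(h·ρ) < pay π)`. -/
theorem pareto_check_characterization {V : Type*} [Fintype V] (E : V → V → Prop)
    (hE : ∀ u, ∃ v, E u v) (V0 : Set V) (v0 : V) (t : ℕ)
    (w0 : V → V → ℕ) (T0 : Set V) (w : Fin t → V → V → ℕ) (T : Fin t → Set V)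
    (π : ℕ → V) (hπ : IsPlay E π) (h0 : π 0 = v0) :
    (∃ σ0 : List V → V, IsStrategy E V0 σ0 ∧ PlayConsistent V0 σ0 π ∧
        ParetoOptimal E V0 v0 w T σ0 π) ↔
      (∀ (m : ℕ) (v : V), π m ∉ V0 → E (π m) v → v ≠ π (m + 1) →
        Player0Wins E V0 v
          (fun ρ => ¬ pay w T (concatPlay (histList π m) ρ) < pay w T π)) := by
  constructor
  · rintro ⟨σ0, hσ0, hcons, hPO⟩ m v hm he hne
    set τ : List V → V := fun l =>
      if l ≠ [] ∧ List.Chain' E (histList π m ++ l) then σ0 (histList π m ++ l)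
      else (hE (l.getLastD v0)).choose with hτ
    refine ⟨τ, ?_, ?_⟩
    · intro l u hch hu
      by_cases hc : (l ++ [u]) ≠ [] ∧ List.Chain' E (histList π m ++ (l ++ [u]))
      · simp only [hτ]
        rw [if_pos hc, ← List.append_assoc]
        exact hσ0 (histList π m ++ l) u (by rw [List.append_assoc]; exact hc.2) hu
      · simp only [hτ]
        rw [if_neg hc, List.getLastD_concat]
        exact (hE u).choose_spec
    · intro ρ hρplay hρ0 hρcons hlt
      have hπ'play : IsPlay E (concatPlay (histList π m) ρ) :=
        isPlay_concatPlay hπ hρplay (by rw [hρ0]; exact he)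
      refine hPO ⟨concatPlay (histList π m) ρ, hπ'play,
        by rw [concatPlay_hist_le (Nat.zero_le m)]; exact h0, ?_, hlt⟩
      intro k hk
      rcases lt_trichotomy k m with h | rfl | h
      · rw [concatPlay_hist_le h.le] at hk
        rw [concatPlay_hist_le (by omega : k + 1 ≤ m), hcons k hk]
        congr 1
        exact histList_congr fun j hj => (concatPlay_hist_le (by omega)).symm
      · rw [concatPlay_hist_le le_rfl] at hk
        exact absurd hk hm
      · obtain ⟨j, rfl⟩ : ∃ j, k = m + 1 + j := ⟨k - (m + 1), by omega⟩
        rw [concatPlay_hist_gt (by omega : m < m + 1 + j),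
          (by omega : m + 1 + j - (m + 1) = j)] at hk
        rw [concatPlay_hist_gt (by omega : m < m + 1 + j + 1),
          (by omega : m + 1 + j + 1 - (m + 1) = j + 1), hρcons j hk, histList_concatPlay]
        simp only [hτ]
        rw [if_pos ⟨by simp [histList], by
          rw [← histList_concatPlay]; exact chain'_histList hπ'play _⟩]
  · intro H
    set C : ℕ → V → Prop := fun m v => π m ∉ V0 ∧ E (π m) v ∧ v ≠ π (m + 1) with hCdef
    have hCiff : ∀ m v, C m v ↔ (π m ∉ V0 ∧ E (π m) v ∧ v ≠ π (m + 1)) := fun m v => by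
      rw [hCdef]
    set τf : ℕ → V → List V → V := fun m v =>
      if h : C m v then
        (H m v ((hCiff m v).mp h).1 ((hCiff m v).mp h).2.1 ((hCiff m v).mp h).2.2).choose
      else fun _ => v with hτf
    have hτf1 : ∀ m v (h : C m v), IsStrategy E V0 (τf m v) := fun m v h => by
      simp only [hτf, dif_pos h]
      exact (H m v ((hCiff m v).mp h).1 ((hCiff m v).mp h).2.1 ((hCiff m v).mp h).2.2).choose_spec.1
    have hτf2 : ∀ m v (h : C m v), ∀ ρ, IsPlay E ρ → ρ 0 = v →
        PlayConsistent V0 (τf m v) ρ →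
        ¬ pay w T (concatPlay (histList π m) ρ) < pay w T π := fun m v h => by
      simp only [hτf, dif_pos h]
      exact (H m v ((hCiff m v).mp h).1 ((hCiff m v).mp h).2.1 ((hCiff m v).mp h).2.2).choose_spec.2
    set σ0 : List V → V := fun l =>
      if Fm π l = l.length then π l.length
      else if 1 ≤ Fm π l ∧ C (Fm π l - 1) (l.getD (Fm π l) v0) then
        τf (Fm π l - 1) (l.getD (Fm π l) v0) (l.drop (Fm π l))
      else (hE (l.getLastD v0)).choose with hσ0def
    have hσprefix : ∀ k, σ0 (histList π k) = π (k + 1) := fun k => by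
      simp only [hσ0def]
      rw [if_pos (by rw [Fm_histList, histList_length]), histList_length]
    refine ⟨σ0, ?_, ?_, ?_⟩
    · intro l u hch hu
      by_cases h1 : Fm π (l ++ [u]) = (l ++ [u]).length
      · have hlen : (l ++ [u]).length = l.length + 1 := by simp
        have h2 : (l ++ [u])[l.length]? = some (π l.length) :=
          Fm_min π _ (by rw [h1, hlen]; omega)
        have h3 : (l ++ [u])[l.length]? = some u := by
          rw [List.getElem?_eq_getElem (by simp)]
          rw [List.getElem_concat_length rfl]
        have hu' : u = π l.length := by
          rw [h2] at h3
          exact (Option.some.inj h3).symm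
        simp only [hσ0def]
        rw [if_pos h1, hlen, hu']
        exact hπ l.length
      · by_cases h2 : 1 ≤ Fm π (l ++ [u]) ∧
          C (Fm π (l ++ [u]) - 1) ((l ++ [u]).getD (Fm π (l ++ [u])) v0)
        · have hd : Fm π (l ++ [u]) ≤ l.length := by
            have := Fm_le_length π (l ++ [u])
            simp only [List.length_append, List.length_singleton] at this h1
            omega
          have hdrop : (l ++ [u]).drop (Fm π (l ++ [u])) = l.drop (Fm π (l ++ [u])) ++ [u] :=
            List.drop_append_of_le_length hd
          simp only [hσ0def]
          rw [if_neg h1, if_pos h2, hdrop]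
          exact hτf1 _ _ h2.2 (l.drop (Fm π (l ++ [u]))) u
            (by rw [← hdrop]; exact hch.suffix (List.drop_suffix _ _)) hu
        · simp only [hσ0def]
          rw [if_neg h1, if_neg h2, List.getLastD_concat]
          exact (hE u).choose_spec
    · intro k hk
      rw [hσprefix k]
    · rintro ⟨π', hp, h0', hc', hlt⟩
      have hne' : π' ≠ π := fun h => lt_irrefl _ (h ▸ hlt)
      have hex : ∃ j, π' j ≠ π j := Function.ne_iff.mp hne'
      have hpos : 0 < Nat.find hex :=
        Nat.pos_of_ne_zero fun h => (h ▸ Nat.find_spec hex) (h0'.trans h0.symm)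
      obtain ⟨m, hDm⟩ : ∃ m, Nat.find hex = m + 1 := ⟨Nat.find hex - 1, by omega⟩
      have hagm : ∀ j ≤ m, π' j = π j := fun j hj =>
        not_not.mp (Nat.find_min hex (by omega))
      have hnem : π' (m + 1) ≠ π (m + 1) := hDm ▸ Nat.find_spec hex
      have hπm : π' m = π m := hagm m le_rfl
      by_cases hmV0 : π m ∈ V0
      · have hcm := hc' m (by rw [hπm]; exact hmV0)
        have hhm : histList π' m = histList π m := histList_congr hagm
        exact hnem (by rw [hcm, hhm, hσprefix m])
      · have hev : E (π m) (π' (m + 1)) := by rw [← hπm]; exact hp m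
        have hC : C m (π' (m + 1)) := (hCiff m _).mpr ⟨hmV0, hev, hnem⟩
        have hρplay : IsPlay E (fun j => π' (j + (m + 1))) := by
          intro k
          have h2 : k + 1 + (m + 1) = k + (m + 1) + 1 := by omega
          simp only []
          rw [h2]
          exact hp (k + (m + 1))
        have hρ0 : (fun j => π' (j + (m + 1))) 0 = π' (m + 1) := by simp
        have hσval : ∀ k, σ0 (histList π' (k + (m + 1))) =
            τf m (π' (m + 1)) (histList (fun j => π' (j + (m + 1))) k) := by
          intro k
          have hF : Fm π (histList π' (k + (m + 1))) = m + 1 :=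
            Fm_dev π π' _ m hagm hnem (by omega)
          have hgetD : (histList π' (k + (m + 1))).getD (m + 1) v0 = π' (m + 1) := by
            rw [List.getD_eq_getElem?_getD, histList_getElem? π' (by omega)]
            rfl
          simp only [hσ0def]
          rw [hF, hgetD]
          rw [if_neg (by rw [histList_length]; omega)]
          rw [if_pos ⟨by omega, by rw [Nat.add_sub_cancel]; exact hC⟩]
          rw [Nat.add_sub_cancel, histList_drop]
        have hρcons : PlayConsistent V0 (τf m (π' (m + 1))) (fun j => π' (j + (m + 1))) := by
          intro k hk
          show π' (k + 1 + (m + 1)) = _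
          have heq : k + 1 + (m + 1) = k + (m + 1) + 1 := by omega
          rw [heq, hc' (k + (m + 1)) hk, hσval k]
        have hconcat : concatPlay (histList π m) (fun j => π' (j + (m + 1))) = π' := by
          funext k
          rcases le_or_gt k m with h | h
          · rw [concatPlay_hist_le h]
            exact (hagm k h).symm
          · rw [concatPlay_hist_gt h]
            show π' (k - (m + 1) + (m + 1)) = π' k
            congr 1
            omega
        exact hτf2 m (π' (m + 1)) hC _ hρplay hρ0 hρcons (by rw [hconcat]; exact hlt)
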